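/- Any straight-line program (SLP) generating a string S must have at least z rules, where z is the number of phrases in the LZ77 parse of S. -/

import Mathlib

/-- `P` occurs in `S` starting at (0-indexed) position `i`. -/
def occursAt {α : Type*} (S P : List α) (i : ℕ) : Prop :=
  i + P.length ≤ S.length ∧ (S.drop i).take P.length = P

/-- Position in `S` where the `t`-th phrase of the parse `bs` begins
(equivalently, where the `(t-1)`-st phrase ends). -/
def phraseEnd {α : Type*} (bs : List (List α)) (t : ℕ) : ℕ :=
  ((bs.take t).flatten).length

/-- `bs` is the (greedy, non-self-referential) LZ77 parse of `S`:
the phrases concatenate to `S`, each phrase is nonempty, each phrase minus its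
last character has an occurrence ending at or before the phrase's start
(or the phrase is a single character), and greediness: unless the phrase reaches
the end of `S`, the whole phrase has no occurrence ending at or before its start. -/
def LZ77Parse {α : Type*} (S : List α) (bs : List (List α)) : Prop :=
  bs.flatten = S ∧ (∀ b ∈ bs, b ≠ []) ∧
  ∀ (t : ℕ) (ht : t < bs.length),
    ((bs.get ⟨t, ht⟩).length = 1 ∨
      ∃ j, occursAt S (bs.get ⟨t, ht⟩).dropLast j ∧
        j + (bs.get ⟨t, ht⟩).dropLast.length ≤ phraseEnd bs t ∧ j < phraseEnd bs t) ∧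
    (phraseEnd bs t + (bs.get ⟨t, ht⟩).length = S.length ∨
      ¬ ∃ j, occursAt S (bs.get ⟨t, ht⟩) j ∧
          j + (bs.get ⟨t, ht⟩).length ≤ phraseEnd bs t)

/-- An occurrence of a length-`m` pattern at position `i` is primary if it contains
the last position of some phrase, i.e. crosses a phrase boundary. -/
def PrimaryOcc {α : Type*} (bs : List (List α)) (i m : ℕ) : Prop :=
  ∃ t < bs.length, i < phraseEnd bs (t + 1) ∧ phraseEnd bs (t + 1) ≤ i + m


/-- A straight-line program: `r` rules (one per nonterminal), each either
`X_i → X_j X_k` with `j, k < i`, or `X_i → a` for a terminal `a`. -/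
structure SLP (α : Type*) where
  r : ℕ
  rhs : Fin r → (Fin r × Fin r) ⊕ α
  wf : ∀ i j k, rhs i = Sum.inl (j, k) → j < i ∧ k < i

/-- The expansion of a nonterminal: the unique string it derives. -/
def SLP.exp {α : Type*} (G : SLP α) (i : Fin G.r) : List α :=
  match h : G.rhs i with
  | Sum.inr a => [a]
  | Sum.inl (j, k) => G.exp j ++ G.exp k
termination_by i.1
decreasing_by
  · exact (G.wf i j k h).1
  · exact (G.wf i j k h).2

section Aux
variable {α : Type*}

lemma occursAt_of_append_prefix {S l₁ l₂ : List α} (h : (l₁ ++ l₂) <+: S) :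
    occursAt S l₂ l₁.length := by
  obtain ⟨t, ht⟩ := h
  constructor
  · have := congrArg List.length ht
    simp at this; omega
  · rw [← ht, List.append_assoc, List.drop_left, List.take_left]

lemma occursAt_sub {S P : List α} {p a b : ℕ} (h : occursAt S P p) (hab : a + b ≤ P.length) :
    occursAt S ((P.drop a).take b) (p + a) := by
  obtain ⟨hlen, heq⟩ := h
  have hblen : ((P.drop a).take b).length = b := by
    simp [List.length_take, List.length_drop]; omega
  constructor
  · omega
  · have e2 : P.drop a = ((S.drop p).drop a).take (P.length - a) := by
      conv_lhs => rw [← heq]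
      rw [List.drop_take]
    rw [hblen, e2, List.take_take, min_eq_left (by omega), List.drop_drop]

lemma phraseEnd_mono {bs : List (List α)} {t u : ℕ} (h : t ≤ u) :
    phraseEnd bs t ≤ phraseEnd bs u := by
  unfold phraseEnd
  obtain ⟨w, hw⟩ := (bs.take u).take_prefix t
  calc ((bs.take t).flatten).length = (((bs.take u).take t).flatten).length := by
        rw [List.take_take, min_eq_left h]
    _ ≤ (((bs.take u).take t).flatten).length + w.flatten.length := Nat.le_add_right _ _
    _ = ((bs.take u).flatten).length := by
        rw [← List.length_append, ← List.flatten_append, hw]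

lemma phraseEnd_succ {bs : List (List α)} {t : ℕ} (ht : t < bs.length) :
    phraseEnd bs (t + 1) = phraseEnd bs t + (bs.get ⟨t, ht⟩).length := by
  unfold phraseEnd
  rw [List.take_succ, List.flatten_append, List.length_append]
  simp [List.getElem?_eq_getElem ht, List.get_eq_getElem]

lemma phraseEnd_le {S : List α} {bs : List (List α)} (h : bs.flatten = S) (t : ℕ) :
    phraseEnd bs t ≤ S.length := by
  unfold phraseEnd
  obtain ⟨w, hw⟩ := bs.take_prefix t
  calc ((bs.take t).flatten).length ≤ ((bs.take t).flatten ++ w.flatten).length := by simp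
  _ = S.length := by rw [← List.flatten_append, hw, h]

lemma phraseEnd_full {S : List α} {bs : List (List α)} (h : bs.flatten = S) {t : ℕ}
    (ht : bs.length ≤ t) : phraseEnd bs t = S.length := by
  unfold phraseEnd
  rw [List.take_of_length_le ht, h]

lemma occursAt_phrase {S : List α} {bs : List (List α)} (h : bs.flatten = S) {t : ℕ}
    (ht : t < bs.length) : occursAt S (bs.get ⟨t, ht⟩) (phraseEnd bs t) := by
  apply occursAt_of_append_prefix
  refine ⟨(bs.drop (t+1)).flatten, ?_⟩
  rw [List.append_assoc, ← List.flatten_cons, ← List.flatten_append, ← h]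
  congr 1
  simp only [List.get_eq_getElem]
  rw [← List.drop_eq_getElem_cons, List.take_append_drop]

/-- a valid "copy" factorization: each factor is a single char or has an
occurrence ending at or before its start -/
def ValidFact (S : List α) (F : List (List α)) : Prop :=
  F.flatten = S ∧ (∀ b ∈ F, b ≠ []) ∧
  ∀ (t : ℕ) (ht : t < F.length),
    (F.get ⟨t, ht⟩).length = 1 ∨
      ∃ p, occursAt S (F.get ⟨t, ht⟩) p ∧ p + (F.get ⟨t, ht⟩).length ≤ phraseEnd F t

lemma greedy_opt {S : List α} {F bs : List (List α)} (hF : ValidFact S F)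
    (hbs : LZ77Parse S bs) : bs.length ≤ F.length := by
  obtain ⟨hFf, hFne, hFfac⟩ := hF
  obtain ⟨hbf, hbne, hbfac⟩ := hbs
  -- main claim
  have claim : ∀ t, phraseEnd F t ≤ phraseEnd bs t := by
    intro t
    induction t with
    | zero => simp [phraseEnd]
    | succ t ih =>
      rcases le_or_gt F.length t with hFt | hFt
      · calc phraseEnd F (t+1) = S.length := phraseEnd_full hFf (by omega)
          _ = phraseEnd F t := (phraseEnd_full hFf hFt).symm
          _ ≤ phraseEnd bs t := ih
          _ ≤ phraseEnd bs (t+1) := phraseEnd_mono (by omega)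
      rcases le_or_gt bs.length t with hbt | hbt
      · rw [phraseEnd_full hbf (by omega)]
        exact phraseEnd_le hFf _
      -- main case
      set p := phraseEnd bs t with hp
      set q' := phraseEnd F (t + 1) with hq'
      set q := phraseEnd F t with hq
      set L := (bs.get ⟨t, hbt⟩).length with hL
      rcases le_or_gt q' p with h1 | h1
      · exact le_trans h1 (phraseEnd_mono (by omega))
      rw [phraseEnd_succ hbt, ← hp, ← hL]
      by_contra hcon
      push_neg at hcon
      -- L < q' - p
      have hqq' : q' = q + (F.get ⟨t, hFt⟩).length := phraseEnd_succ hFt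
      have hLpos : 0 < L := List.length_pos_iff.mpr (hbne _ (bs.get_mem ⟨t, hbt⟩))
      -- find occurrence of bs[t] ending at or before p
      have hocc : ∃ j, occursAt S (bs.get ⟨t, hbt⟩) j ∧ j + (bs.get ⟨t, hbt⟩).length ≤ phraseEnd bs t := by
        rcases hFfac t hFt with h2 | ⟨p₀, hocc₀, hend₀⟩
        · -- single char factor: q' = q+1, q ≤ p < q' forces p = q, then p+L ≥ q+1
          exfalso; omega
        · -- bs[t] is a segment of F[t]
          have hqp : q ≤ p := ih
          have hsub : occursAt S ((((F.get ⟨t, hFt⟩)).drop (p - q)).take L) (p₀ + (p - q)) :=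
            occursAt_sub hocc₀ (by omega)
          have hFocc : occursAt S (F.get ⟨t, hFt⟩) q := occursAt_phrase hFf hFt
          have hbocc : occursAt S (bs.get ⟨t, hbt⟩) p := occursAt_phrase hbf hbt
          have hseg : ((F.get ⟨t, hFt⟩).drop (p - q)).take L = bs.get ⟨t, hbt⟩ := by
            have e2 : bs.get ⟨t, hbt⟩ = (S.drop p).take L := hbocc.2.symm
            rw [e2]
            conv_lhs => rw [hFocc.2.symm]
            rw [List.drop_take, List.take_take, List.drop_drop]
            have h6 : q + (p - q) = p := by omega
            rw [h6, min_eq_left (by omega)]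
          rw [hseg] at hsub
          exact ⟨p₀ + (p - q), hsub, by omega⟩
      rcases (hbfac t hbt).2 with h3 | h3
      · -- phrase reaches end of S
        have := phraseEnd_le hFf (t + 1)
        omega
      · exact h3 hocc
  -- conclude
  by_contra hcon
  push_neg at hcon
  have h1 : S.length ≤ phraseEnd bs F.length := by
    rw [← phraseEnd_full hFf (le_refl F.length)]
    exact claim F.length
  have h2 : phraseEnd bs F.length < phraseEnd bs (F.length + 1) := by
    rw [phraseEnd_succ hcon]
    have h4 : 0 < (bs.get ⟨F.length, hcon⟩).length :=
      List.length_pos_iff.mpr (hbne _ (bs.get_mem ⟨F.length, hcon⟩))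
    omega
  have h3 : phraseEnd bs (F.length + 1) ≤ S.length := phraseEnd_le hbf _
  omega

end Aux

section B
variable {α : Type*}

lemma SLP.exp_inr {G : SLP α} {i : Fin G.r} {a : α} (h : G.rhs i = Sum.inr a) :
    G.exp i = [a] := by
  rw [SLP.exp]
  split <;> simp_all

lemma SLP.exp_inl {G : SLP α} {i j k : Fin G.r} (h : G.rhs i = Sum.inl (j, k)) :
    G.exp i = G.exp j ++ G.exp k := by
  rw [SLP.exp]
  split <;> simp_all

lemma SLP.exp_ne_nil_aux (G : SLP α) : ∀ (n : ℕ) (i : Fin G.r), i.1 < n → G.exp i ≠ [] := by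
  intro n
  induction n with
  | zero => intro i hi; omega
  | succ n ih =>
    intro i hi
    rcases h : G.rhs i with ⟨j, k⟩ | a
    · rw [SLP.exp_inl h]
      simp only [ne_eq, List.append_eq_nil_iff]
      intro ⟨h1, _h2⟩
      exact ih j (by have := (G.wf i j k h).1; omega) h1
    · simp [SLP.exp_inr h]

lemma SLP.exp_ne_nil (G : SLP α) (i : Fin G.r) : G.exp i ≠ [] :=
  SLP.exp_ne_nil_aux G (i.1 + 1) i (by omega)

def build (G : SLP α) : Fin G.r → Finset (Fin G.r) → List (List α) × Finset (Fin G.r)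
  | i, seen =>
    if i ∈ seen then ([G.exp i], seen)
    else
      match h : G.rhs i with
      | Sum.inr _a => ([G.exp i], insert i seen)
      | Sum.inl (j, k) =>
        let r1 := build G j (insert i seen)
        let r2 := build G k r1.2
        (r1.1 ++ r2.1, r2.2)
termination_by i => i.1
decreasing_by
  · exact (G.wf i j k h).1
  · exact (G.wf i j k h).2

lemma build_eq (G : SLP α) (i : Fin G.r) (seen : Finset (Fin G.r)) :
    build G i seen =
      if i ∈ seen then ([G.exp i], seen)
      else
        match G.rhs i with
        | Sum.inr _a => ([G.exp i], insert i seen)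
        | Sum.inl (j, k) =>
          (((build G j (insert i seen)).1 ++ (build G k (build G j (insert i seen)).2).1),
            (build G k (build G j (insert i seen)).2).2) := by
  rw [build]
  by_cases hmem : i ∈ seen
  · simp [hmem]
  · simp only [if_neg hmem]
    rcases hr : G.rhs i with ⟨j, k⟩ | a <;> simp [hr]

/-- `exp x` has a full occurrence in `S` ending at or before position `n`. -/
def Closed (G : SLP α) (S : List α) (n : ℕ) (x : Fin G.r) : Prop :=
  ∃ p, occursAt S (G.exp x) p ∧ p + (G.exp x).length ≤ n

lemma Closed.mono {G : SLP α} {S : List α} {n m : ℕ} {x : Fin G.r} (h : Closed G S n x)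
    (hnm : n ≤ m) : Closed G S m x := by
  obtain ⟨p, h1, h2⟩ := h
  exact ⟨p, h1, h2.trans hnm⟩

/-- number of branching nonterminals in a set -/
def bcard (G : SLP α) (s : Finset (Fin G.r)) : ℕ :=
  (s.filter (fun x => (G.rhs x).isLeft = true)).card

lemma bcard_mono {G : SLP α} {s s' : Finset (Fin G.r)} (h : s ⊆ s') :
    bcard G s ≤ bcard G s' :=
  Finset.card_le_card (Finset.filter_subset_filter _ h)

lemma build_spec (G : SLP α) (S : List α) :
    ∀ (n : ℕ) (i : Fin G.r), i.1 < n → ∀ (seen : Finset (Fin G.r)) (acc : List α)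
      (F : List (List α)) (s' : Finset (Fin G.r)),
      build G i seen = (F, s') →
      (acc ++ G.exp i) <+: S →
      (∀ x ∈ seen, x ≤ i → Closed G S acc.length x) →
      F.flatten = G.exp i ∧
      seen ⊆ s' ∧
      (∀ x ∈ s', x ∉ seen → Closed G S (acc.length + (G.exp i).length) x) ∧
      F.length + bcard G seen ≤ bcard G s' + 1 ∧
      (∀ b ∈ F, b ≠ []) ∧
      (∀ (t : ℕ) (ht : t < F.length),
        (F.get ⟨t, ht⟩).length = 1 ∨
          ∃ p, occursAt S (F.get ⟨t, ht⟩) p ∧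
            p + (F.get ⟨t, ht⟩).length ≤ acc.length + ((F.take t).flatten).length) := by
  intro n
  induction n with
  | zero => intro i hi; omega
  | succ n ih =>
    intro i hi seen acc F s' hb hpre hseen
    rw [build_eq] at hb
    by_cases hmem : i ∈ seen
    · rw [if_pos hmem] at hb
      injection hb with h1 h2
      subst h1; subst h2
      obtain ⟨p, hocc, hple⟩ := hseen i hmem le_rfl
      refine ⟨by simp, Finset.Subset.refl _, fun x hx hx' => absurd hx hx', by simp only [List.length_singleton]; omega, ?_, ?_⟩
      · intro b hbm
        simp only [List.mem_singleton] at hbm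
        subst hbm
        exact G.exp_ne_nil i
      · intro t ht
        simp only [List.length_singleton] at ht
        have : t = 0 := by omega
        subst this
        right
        exact ⟨p, hocc, by simpa using hple⟩
    · rw [if_neg hmem] at hb
      split at hb
      next a heq =>
        injection hb with h1 h2
        subst h1; subst h2
        refine ⟨by simp, Finset.subset_insert _ _, ?_, ?_, ?_, ?_⟩
        · intro x hx hx'
          rcases Finset.mem_insert.mp hx with rfl | hx2
          · exact ⟨acc.length, occursAt_of_append_prefix hpre, le_rfl⟩
          · exact absurd hx2 hx'
        · have h3 : bcard G seen ≤ bcard G (insert i seen) :=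
            bcard_mono (Finset.subset_insert _ _)
          simp only [List.length_singleton]
          omega
        · intro b hbm
          simp only [List.mem_singleton] at hbm
          subst hbm
          exact G.exp_ne_nil i
        · intro t ht
          simp only [List.length_singleton] at ht
          have : t = 0 := by omega
          subst this
          left
          show (G.exp i).length = 1
          rw [SLP.exp_inr heq]
          rfl
      next j k heq =>
        injection hb with h1 h2
        subst h1; subst h2
        have hjk := G.wf i j k heq
        have hexp : G.exp i = G.exp j ++ G.exp k := SLP.exp_inl heq
        have hjn : j.1 < n := by have : j.1 < i.1 := hjk.1; omega
        have hkn : k.1 < n := by have : k.1 < i.1 := hjk.2; omega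
        set F1 := (build G j (insert i seen)).1 with hF1
        set s1 := (build G j (insert i seen)).2 with hs1
        set F2 := (build G k s1).1 with hF2
        set s2 := (build G k s1).2 with hs2
        have pre1 : (acc ++ G.exp j) <+: S := by
          refine List.IsPrefix.trans ?_ hpre
          rw [hexp, ← List.append_assoc]
          exact (acc ++ G.exp j).prefix_append _
        have hseen1 : ∀ x ∈ insert i seen, x ≤ j → Closed G S acc.length x := by
          intro x hx hxj
          rcases Finset.mem_insert.mp hx with rfl | hx2
          · exact absurd (lt_of_le_of_lt hxj hjk.1) (lt_irrefl x)
          · exact hseen x hx2 (hxj.trans hjk.1.le)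
        obtain ⟨a1, b1, c1, d1, e1, f1⟩ :=
          ih j hjn (insert i seen) acc F1 s1 rfl pre1 hseen1
        have pre2 : ((acc ++ G.exp j) ++ G.exp k) <+: S := by
          rw [List.append_assoc, ← hexp]
          exact hpre
        have hseen2 : ∀ x ∈ s1, x ≤ k → Closed G S (acc ++ G.exp j).length x := by
          intro x hx hxk
          by_cases hx1 : x ∈ insert i seen
          · rcases Finset.mem_insert.mp hx1 with rfl | hx2
            · exact absurd (lt_of_le_of_lt hxk hjk.2) (lt_irrefl x)
            · exact (hseen x hx2 (hxk.trans hjk.2.le)).mono (by simp)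
          · exact (c1 x hx hx1).mono (by simp)
        obtain ⟨a2, b2, c2, d2, e2, f2⟩ :=
          ih k hkn s1 (acc ++ G.exp j) F2 s2 rfl pre2 hseen2
        refine ⟨?_, ((Finset.subset_insert i seen).trans b1).trans b2, ?_, ?_, ?_, ?_⟩
        · rw [List.flatten_append, a1, a2, hexp]
        · intro x hx hxn
          by_cases hx1 : x ∈ s1
          · by_cases hxi : x = i
            · subst hxi
              exact ⟨acc.length, occursAt_of_append_prefix hpre, le_rfl⟩
            · have hnotin : x ∉ insert i seen := by
                simp only [Finset.mem_insert]
                push_neg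
                exact ⟨hxi, hxn⟩
              refine (c1 x hx1 hnotin).mono ?_
              simp only [hexp, List.length_append]
              omega
          · refine (c2 x hx hx1).mono ?_
            simp only [hexp, List.length_append]
            omega
        · have bins : bcard G (insert i seen) = bcard G seen + 1 := by
            unfold bcard
            rw [Finset.filter_insert, if_pos (by simp [heq]),
              Finset.card_insert_of_notMem (fun hx => hmem (Finset.mem_of_mem_filter _ hx))]
          simp only [List.length_append]
          omega
        · intro b hbm
          rcases List.mem_append.mp hbm with hmm | hmm
          exacts [e1 b hmm, e2 b hmm]
        · intro t ht
          have htlen : t < F1.length + F2.length := by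
            simpa [List.length_append] using ht
          by_cases htl : t < F1.length
          · have hget : (F1 ++ F2).get ⟨t, ht⟩ = F1.get ⟨t, htl⟩ := by
              simp [List.get_eq_getElem, List.getElem_append_left htl]
            have htake : (F1 ++ F2).take t = F1.take t := by
              rw [List.take_append]
              have : t - F1.length = 0 := by omega
              rw [this]
              simp
            rw [hget, htake]
            exact f1 t htl
          · have ht2 : t - F1.length < F2.length := by omega
            have hget : (F1 ++ F2).get ⟨t, ht⟩ = F2.get ⟨t - F1.length, ht2⟩ := by
              simp [List.get_eq_getElem, List.getElem_append_right (le_of_not_gt htl)]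
            have htake : (F1 ++ F2).take t = F1 ++ F2.take (t - F1.length) := by
              rw [List.take_append, List.take_of_length_le (le_of_not_gt htl)]
            rw [hget, htake]
            rcases f2 (t - F1.length) ht2 with hone | ⟨p, hocc, hle⟩
            · left; exact hone
            · right
              refine ⟨p, hocc, ?_⟩
              rw [List.flatten_append, a1]
              simp only [List.length_append] at hle ⊢
              omega

end B


/-- Any SLP generating `S` has at least as many rules as the number of phrases
in the LZ77 parse of `S`. -/
theorem slp_rules_ge_lz77_phrases {α : Type*} (G : SLP α) (start : Fin G.r)
    (S : List α) (bs : List (List α)) (hS : G.exp start = S)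
    (h : LZ77Parse S bs) :
    bs.length ≤ G.r := by
  obtain ⟨F, s', hb⟩ : ∃ F s', build G start ∅ = (F, s') := ⟨_, _, rfl⟩
  obtain ⟨a0, _b0, _c0, d0, e0, f0⟩ :=
    build_spec G S (start.1 + 1) start (by omega) ∅ [] F s' hb
      (by rw [List.nil_append, hS]) (by simp)
  have hVF : ValidFact S F := by
    refine ⟨by rw [a0, hS], e0, ?_⟩
    intro t ht
    rcases f0 t ht with h1 | ⟨p, h2, h3⟩
    · exact Or.inl h1
    · exact Or.inr ⟨p, h2, by simpa [phraseEnd] using h3⟩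
  have h1 := greedy_opt hVF h
  have hr : 0 < G.r := start.pos
  have hzero : ¬ ((G.rhs ⟨0, hr⟩).isLeft = true) := by
    rcases h0 : G.rhs ⟨0, hr⟩ with ⟨j, k⟩ | a
    · exfalso
      have hlt : j.1 < 0 := (G.wf _ j k h0).1
      omega
    · simp [h0]
  have hb2 : bcard G s' ≤ G.r - 1 := by
    unfold bcard
    have hsub : s'.filter (fun x => (G.rhs x).isLeft = true) ⊆
        Finset.univ.erase ⟨0, hr⟩ := by
      intro x hx
      rw [Finset.mem_erase]
      refine ⟨?_, Finset.mem_univ _⟩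
      rintro rfl
      exact hzero (Finset.mem_filter.mp hx).2
    calc _ ≤ (Finset.univ.erase (⟨0, hr⟩ : Fin G.r)).card := Finset.card_le_card hsub
    _ = G.r - 1 := by rw [Finset.card_erase_of_mem (Finset.mem_univ _)]; simp
  have hFlen : F.length ≤ G.r := by
    have hemp : bcard G (∅ : Finset (Fin G.r)) = 0 := by simp [bcard]
    omega
  omega
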